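/- arXiv:1906.09004 — 3 statements merged into one kernel-verified Lean document; each statement's English description precedes it below -/
import Mathlib

section
/- Let M_0, M_1, ..., M_J be real numbers (measure values) and let α ∈ (0,1). Define M_(α) as the largest value among {M_0,...,M_J} such that #{j : M_j < M_(α)} ≤ α(J+1), and let I_α = {j : M_j ≥ M_(α)}. Define the Monte Carlo p-value p = (1/(J+1)) · #{j : M_j ≤ M_0}. Then p ≤ α if and only if 0 ∉ I_α, provided there are no ties among the M_j. -/
open Finset

/-- Key step of Theorem 1: with distinct measure values `M 0, …, M J`,
`α ∈ (0,1)`, critical value `Mα` (the largest among the `M j` such that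
`#{j : M j < Mα} ≤ α (J+1)`), and `Iα = {j : M j ≥ Mα}`, the Monte Carlo p-value
`p = #{j : M j ≤ M 0} / (J+1)` satisfies `p ≤ α ↔ 0 ∉ Iα`. -/
theorem stmt0 (J : ℕ) (M : Fin (J + 1) → ℝ) (hM : Function.Injective M)
    (α : ℝ) (hα : α ∈ Set.Ioo (0 : ℝ) 1) (Mα : ℝ)
    (hmem : ∃ j, M j = Mα)
    (hcard : ((univ.filter (fun j => M j < Mα)).card : ℝ) ≤ α * (J + 1))
    (hmax : ∀ j : Fin (J + 1),
      ((univ.filter (fun j' => M j' < M j)).card : ℝ) ≤ α * (J + 1) → M j ≤ Mα) :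
    ((univ.filter (fun j => M j ≤ M 0)).card : ℝ) / (J + 1) ≤ α ↔
      0 ∉ {j : Fin (J + 1) | Mα ≤ M j} := by
  obtain ⟨hα0, hα1⟩ := hα
  have hJ : (0:ℝ) < (J:ℝ) + 1 := by positivity
  simp only [Set.mem_setOf_eq, not_le]
  rw [div_le_iff₀ hJ]
  constructor
  · intro hp
    by_contra hle
    push_neg at hle
    have hsub0 : univ.filter (fun j' => M j' < M 0) ⊆ univ.filter (fun j => M j ≤ M 0) :=
      Finset.monotone_filter_right _ (fun j _ h => le_of_lt h)
    have h0 : ((univ.filter (fun j' => M j' < M 0)).card : ℝ) ≤ α * (J+1) :=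
      le_trans (by exact_mod_cast Finset.card_le_card hsub0) hp
    have hM0 : M 0 = Mα := le_antisymm (hmax 0 h0) hle
    by_cases hmax0 : ∀ j, M j ≤ M 0
    · have hall : univ.filter (fun j => M j ≤ M 0) = (univ : Finset (Fin (J+1))) :=
        Finset.filter_true_of_mem (fun j _ => hmax0 j)
      rw [hall] at hp
      simp only [Finset.card_univ, Fintype.card_fin] at hp
      push_cast at hp
      nlinarith
    · push_neg at hmax0
      obtain ⟨j₁, hj₁⟩ := hmax0
      obtain ⟨j', hj'mem, hj'min⟩ := Finset.exists_min_image
        (univ.filter fun j => M 0 < M j) M ⟨j₁, by simp [hj₁]⟩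
      simp only [Finset.mem_filter, Finset.mem_univ, true_and] at hj'mem hj'min
      have hfeq : univ.filter (fun j'' => M j'' < M j') = univ.filter (fun j => M j ≤ M 0) := by
        ext j
        simp only [Finset.mem_filter, Finset.mem_univ, true_and]
        constructor
        · intro h
          by_contra hc
          push_neg at hc
          exact absurd (hj'min j (by simp [hc])) (not_le.mpr h)
        · intro h
          exact lt_of_le_of_lt h hj'mem
      have hj'le : M j' ≤ Mα := hmax j' (by rw [hfeq]; exact hp)
      rw [hM0] at hj'mem
      linarith
  · intro hlt
    have hsub : univ.filter (fun j => M j ≤ M 0) ⊆ univ.filter (fun j => M j < Mα) :=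
      Finset.monotone_filter_right _ (fun j _ h => lt_of_le_of_lt h hlt)
    exact le_trans (by exact_mod_cast Finset.card_le_card hsub) hcard
end

section
/- The ERL update/comparison procedure based on the k most extreme ranks and their counts is correct as long as ties are broken within the first k distinct rank values: if two augmented measures (R_1,...,R_k, c_1,...,c_k) and (R'_1,...,R'_k, c'_1,...,c'_k) built from sorted rank vectors differ at some position i ≤ k (either R_i ≠ R'_i, or R_i = R'_i and c_i ≠ c'_i, with all earlier positions equal), then the comparison rule of Section 4.3 (smaller R_i more extreme; equal R_i with larger count more extreme) agrees with the reverse lexicographic order ≺ on the full sorted rank vectors. -/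
/-- Run-length encoding of a list: the distinct values in order of appearance together
with their multiplicities.  For a nondecreasingly sorted list this lists the distinct
values in increasing order with their counts; the ERL algorithm records its first `k`
pairs `(R_1, c_1), …, (R_k, c_k)` as the augmented measure. -/
def rle : List ℤ → List (ℤ × ℕ)
  | [] => []
  | a :: l =>
    match rle l with
    | [] => [(a, 1)]
    | (b, c) :: t => if a = b then (b, c + 1) :: t else (a, 1) :: (b, c) :: t

/-- The ERL comparison rule of Section 4.3: `(R, c)` is more extreme than `(R', c')`
iff `R < R'`, or `R = R'` and `c > c'`. -/
def rlt (p q : ℤ × ℕ) : Prop :=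
  p.1 < q.1 ∨ (p.1 = q.1 ∧ q.2 < p.2)

lemma lex_take {α} {r : α → α → Prop} :
    ∀ (k : ℕ) (l₁ l₂ : List α), List.Lex r (l₁.take k) (l₂.take k) → List.Lex r l₁ l₂ := by
  intro k
  induction k with
  | zero => intro l₁ l₂ h; simp at h
  | succ k ih =>
    intro l₁ l₂ h
    cases l₁ with
    | nil =>
      cases l₂ with
      | nil => simp at h
      | cons b t => exact List.Lex.nil
    | cons a s =>
      cases l₂ with
      | nil => simp at h
      | cons b t =>
        simp only [List.take_succ_cons] at h
        cases h with
        | rel hr => exact List.Lex.rel hr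
        | cons h' => exact List.Lex.cons (ih s t h')

lemma lex_append {α} {r : α → α → Prop} (p : List α) {l₁ l₂ : List α}
    (h : List.Lex r l₁ l₂) : List.Lex r (p ++ l₁) (p ++ l₂) := by
  induction p with
  | nil => exact h
  | cons x xs ih => exact List.Lex.cons ih

lemma rle_cons (a : ℤ) (l : List ℤ) :
    rle (a :: l) = match rle l with
      | [] => [(a, 1)]
      | (b, c) :: t => if a = b then (b, c + 1) :: t else (a, 1) :: (b, c) :: t := rfl

lemma rle_decomp : ∀ (l' : List ℤ) (a : ℤ), (a :: l').Pairwise (· ≤ ·) →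
    ∃ n t, 0 < n ∧ a :: l' = List.replicate n a ++ t ∧
      rle (a :: l') = (a, n) :: rle t ∧
      (∀ x ∈ t, a < x) ∧ t.Pairwise (· ≤ ·) := by
  intro l'
  induction l' with
  | nil =>
    intro a _
    exact ⟨1, [], one_pos, by simp, by simp [rle], by simp, List.Pairwise.nil⟩
  | cons b ys ih =>
    intro a hs
    have hxs : (b :: ys).Pairwise (· ≤ ·) := (List.pairwise_cons.mp hs).2
    have hab : a ≤ b := (List.pairwise_cons.mp hs).1 b (by simp)
    obtain ⟨n, t, hn, heq, hrle, hgt, hts⟩ := ih b hxs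
    rcases eq_or_lt_of_le hab with hEq | hLt
    · subst hEq
      refine ⟨n + 1, t, Nat.succ_pos _, ?_, ?_, hgt, hts⟩
      · rw [List.replicate_succ, List.cons_append, ← heq]
      · rw [rle_cons, hrle]
        simp
    · refine ⟨1, b :: ys, one_pos, by simp, ?_, ?_, hxs⟩
      · rw [rle_cons, hrle]
        simp only [if_neg (ne_of_lt hLt)]
      · intro x hx
        rw [heq] at hx
        rcases List.mem_append.mp hx with hx | hx
        · rw [List.eq_of_mem_replicate hx]; exact hLt
        · exact hLt.trans (hgt x hx)

lemma main_lex : ∀ (N : ℕ) (u v : List ℤ), u.length ≤ N → u.Pairwise (· ≤ ·) →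
    v.Pairwise (· ≤ ·) → u.length = v.length → List.Lex rlt (rle u) (rle v) →
    List.Lex (· < ·) u v := by
  intro N
  induction N with
  | zero =>
    intro u v hN _ _ hlen h
    have hu0 : u = [] := List.length_eq_zero_iff.mp (Nat.le_zero.mp hN)
    have hv0 : v = [] := List.length_eq_zero_iff.mp (by omega)
    subst hu0; subst hv0
    exact absurd h List.not_lex_nil
  | succ N ih =>
    intro u v hN hu hv hlen h
    cases u with
    | nil =>
      have hv0 : v = [] := List.length_eq_zero_iff.mp (by simpa using hlen.symm)
      subst hv0
      exact absurd h List.not_lex_nil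
    | cons a u' =>
      cases v with
      | nil =>
        have : rle ([] : List ℤ) = [] := rfl
        rw [this] at h
        exact absurd h List.not_lex_nil
      | cons b v' =>
        obtain ⟨m, s, hm, hueq, hru, hsgt, hss⟩ := rle_decomp u' a hu
        obtain ⟨n, t, hn, hveq, hrv, htgt, hts⟩ := rle_decomp v' b hv
        rw [hru, hrv] at h
        cases h with
        | rel hr =>
          rcases hr with hlt | ⟨heq, hcnt⟩
          · exact List.Lex.rel hlt
          · -- a = b, n < m
            simp only at heq hcnt
            subst heq
            rw [hueq, hveq]
            have hrep : List.replicate m a = List.replicate n a ++ List.replicate (m - n) a := by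
              rw [← List.replicate_add]; congr 1; omega
            rw [hrep, List.append_assoc]
            apply lex_append
            cases t with
            | nil =>
              exfalso
              have h1 : (a :: u').length = m + s.length := by rw [hueq]; simp
              have h2 : (a :: v').length = n := by rw [hveq]; simp
              omega
            | cons c t' =>
              have hac : a < c := htgt c (by simp)
              obtain ⟨d, hd⟩ : ∃ d, m - n = d + 1 := ⟨m - n - 1, by omega⟩
              rw [hd, List.replicate_succ, List.cons_append]
              exact List.Lex.rel hac
        | cons h' =>
          -- heads equal: a = b, m = n, h' : Lex rlt (rle s) (rle t)
          have hlens : s.length = t.length := by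
            have h1 : (a :: u').length = m + s.length := by rw [hueq]; simp
            have h2 : (a :: v').length = m + t.length := by rw [hveq]; simp
            omega
          have hsN : s.length ≤ N := by
            have h1 : (a :: u').length = m + s.length := by rw [hueq]; simp
            omega
          have hst : List.Lex (· < ·) s t := ih s t hsN hss hts hlens h'
          rw [hueq, hveq]
          exact lex_append _ hst

/-- correctness of the truncated ERL comparison.  If the augmented
measures (the first `k` value–count pairs of the run-length encodings of the sorted rank
vectors `u, v`) differ, and the comparison rule of Section 4.3 declares `u` more extreme,
then `u` precedes `v` in the reverse lexicographic order on the full sorted vectors. -/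
theorem stmt15 (k : ℕ) (u v : List ℤ) (hu : u.Pairwise (· ≤ ·)) (hv : v.Pairwise (· ≤ ·))
    (hlen : u.length = v.length)
    (h : List.Lex rlt ((rle u).take k) ((rle v).take k)) :
    List.Lex (· < ·) u v := by
  exact main_lex u.length u v le_rfl hu hv hlen (lex_take k _ _ h)
end

section
/- The run-length encoding comparison is equivalent to lexicographic comparison: let u, v be nondecreasing integer sequences of equal length n, with run-length encodings ((R_1,c_1),(R_2,c_2),...) and ((R'_1,c'_1),(R'_2,c'_2),...) listing the distinct values in increasing order with multiplicities. Then u < v lexicographically if and only if at the first index i where (R_i,c_i) ≠ (R'_i,c'_i), either R_i < R'_i, or R_i = R'_i and c_i > c'_i. -/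
instance : IsIrrefl (ℤ × ℕ) rlt := ⟨fun p h => by rcases h with h | ⟨_, h⟩ <;> omega⟩

lemma rle_cons_s16 (b : ℤ) (l : List ℤ) : ∃ c t, rle (b :: l) = (b, c) :: t := by
  rcases h : rle l with _ | ⟨⟨b', c⟩, t⟩
  · exact ⟨1, [], by simp [rle, h]⟩
  · by_cases hb : b = b'
    · subst hb; exact ⟨c + 1, t, by simp [rle, h]⟩
    · exact ⟨1, (b', c) :: t, by simp [rle, h, hb]⟩

lemma rle_replicate_append (a : ℤ) (k : ℕ) (hk : 0 < k) (r : List ℤ)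
    (hr : ∀ b ∈ r.head?, a ≠ b) :
    rle (List.replicate k a ++ r) = (a, k) :: rle r := by
  induction k with
  | zero => omega
  | succ k ih =>
    rcases Nat.eq_zero_or_pos k with hk0 | hk0
    · subst hk0
      simp only [List.replicate_succ, List.replicate_zero, List.cons_append, List.nil_append]
      rcases r with _ | ⟨b, t⟩
      · rfl
      · obtain ⟨c, t', h⟩ := rle_cons_s16 b t
        have hab : a ≠ b := hr b (by simp)
        show (match rle (b :: t) with
          | [] => [(a, 1)]
          | (b, c) :: t => if a = b then (b, c + 1) :: t else (a, 1) :: (b, c) :: t) =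
          (a, 1) :: rle (b :: t)
        rw [h]
        simp [hab]
    · have := ih hk0
      rw [List.replicate_succ, List.cons_append]
      simp [rle, this]

lemma lex_replicate_append {α} {r : α → α → Prop} [IsIrrefl α r] (a : α) (k : ℕ)
    (s t : List α) :
    List.Lex r (List.replicate k a ++ s) (List.replicate k a ++ t) ↔ List.Lex r s t := by
  induction k with
  | zero => simp
  | succ k ih => simpa [List.replicate_succ, List.lex_cons_iff] using ih

lemma head_dropWhile_not {α} (p : α → Bool) (l : List α) (c : α) (t : List α)
    (h : l.dropWhile p = c :: t) : ¬ p c := by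
  have := List.dropWhile_get_zero_not p l (by rw [h]; simp)
  simpa [h] using this

lemma sorted_decomp (a : ℤ) (u' : List ℤ) (hu : (a :: u').Pairwise (· ≤ ·)) :
    ∃ p u₂, 1 ≤ p ∧ a :: u' = List.replicate p a ++ u₂ ∧
      (∀ c ∈ u₂.head?, a < c) ∧ u₂.Pairwise (· ≤ ·) := by
  refine ⟨((a :: u').takeWhile (· == a)).length, (a :: u').dropWhile (· == a), ?_, ?_, ?_, ?_⟩
  · rw [List.takeWhile_cons_of_pos (by simp)]; simp
  · conv_lhs => rw [← List.takeWhile_append_dropWhile (p := (· == a)) (l := a :: u')]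
    congr 1
    apply List.eq_replicate_of_mem
    intro x hx
    simpa using List.mem_takeWhile_imp hx
  · intro c hc
    rcases hd : (a :: u').dropWhile (· == a) with _ | ⟨c', t⟩
    · simp [hd] at hc
    · rw [hd] at hc
      simp only [List.head?_cons, Option.mem_some_iff] at hc
      rw [← hc]
      have hne : a ≠ c' := by
        have := head_dropWhile_not (· == a) (a :: u') c' t hd
        simp only [beq_iff_eq] at this
        exact fun h => this h.symm
      have hmem : c' ∈ a :: u' := (List.dropWhile_sublist _).subset (by rw [hd]; simp)
      have hle : a ≤ c' := by
        rcases List.mem_cons.mp hmem with h | h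
        · exact le_of_eq h.symm
        · exact (List.pairwise_cons.mp hu).1 c' h
      exact lt_of_le_of_ne hle hne
  · exact hu.sublist (List.dropWhile_sublist _)

/-- correctness of the (untruncated) ERL comparison algorithm.  For
nondecreasing integer sequences `u, v` of equal length, `u < v` lexicographically iff
their run-length encodings compare by the rule "smaller value first; at equal value,
larger count first" at the first differing pair. -/
theorem stmt16 (u v : List ℤ) (hu : u.Pairwise (· ≤ ·)) (hv : v.Pairwise (· ≤ ·))
    (hlen : u.length = v.length) :
    List.Lex (· < ·) u v ↔ List.Lex rlt (rle u) (rle v) := by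
  suffices H : ∀ n (u v : List ℤ), u.length ≤ n → u.Pairwise (· ≤ ·) → v.Pairwise (· ≤ ·) →
      u.length = v.length →
      (List.Lex (· < ·) u v ↔ List.Lex rlt (rle u) (rle v)) from
    H u.length u v le_rfl hu hv hlen
  intro n
  induction n with
  | zero =>
    intro u v hn _ _ hlen
    have hu0 : u = [] := List.eq_nil_of_length_eq_zero (by omega)
    have hv0 : v = [] := List.eq_nil_of_length_eq_zero (by omega)
    subst hu0; subst hv0
    simp [rle]
  | succ n ih =>
    intro u v hn hu hv hlen
    rcases u with _ | ⟨a, u'⟩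
    · have hv0 : v = [] := List.eq_nil_of_length_eq_zero (by simpa using hlen.symm)
      subst hv0; simp [rle]
    rcases v with _ | ⟨b, v'⟩
    · simp at hlen
    obtain ⟨p, u₂, hp1, hud, hu₂gt, hu₂s⟩ := sorted_decomp a u' hu
    obtain ⟨q, v₂, hq1, hvd, hv₂gt, hv₂s⟩ := sorted_decomp b v' hv
    have hu₂h : ∀ c ∈ u₂.head?, a ≠ c := fun c hc => ne_of_lt (hu₂gt c hc)
    have hv₂h : ∀ c ∈ v₂.head?, b ≠ c := fun c hc => ne_of_lt (hv₂gt c hc)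
    have hru : rle (a :: u') = (a, p) :: rle u₂ := by
      rw [hud]; exact rle_replicate_append a p (by omega) u₂ hu₂h
    have hrv : rle (b :: v') = (b, q) :: rle v₂ := by
      rw [hvd]; exact rle_replicate_append b q (by omega) v₂ hv₂h
    have hlu : (a :: u').length = p + u₂.length := by rw [hud]; simp
    have hlv : (b :: v').length = q + v₂.length := by rw [hvd]; simp
    rcases lt_trichotomy a b with hab | hab | hab
    · constructor
      · intro _; rw [hru, hrv]; exact List.Lex.rel (Or.inl hab)
      · intro _; exact List.Lex.rel hab
    · subst hab
      rcases lt_trichotomy p q with hpq | hpq | hpq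
      · -- p < q : both false
        constructor
        · intro h
          exfalso
          rw [hud, hvd, show List.replicate q a = List.replicate p a ++ List.replicate (q - p) a
              by rw [← List.replicate_add]; congr 1; omega, List.append_assoc,
            lex_replicate_append] at h
          have hu₂ne : u₂ ≠ [] := by
            intro h0
            rw [h0] at hlu
            simp only [List.length_cons, List.length_nil] at hlu hlv hlen
            omega
          rcases hq2 : u₂ with _ | ⟨c, t⟩
          · exact hu₂ne hq2
          have hac : a < c := by rw [hq2] at hu₂gt; exact hu₂gt c (by simp)
          rw [hq2, show List.replicate (q - p) a ++ v₂ = a :: (List.replicate (q - p - 1) a ++ v₂)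
              by rw [show q - p = (q - p - 1) + 1 by omega, List.replicate_succ]; simp] at h
          cases h with
          | rel h' => omega
          | cons h' => omega
        · intro h
          exfalso
          rw [hru, hrv] at h
          cases h with
          | rel h' => rcases h' with h' | ⟨_, h'⟩ <;> omega
          | cons h' => omega
      · -- p = q : recurse
        subst hpq
        have hlen₂ : u₂.length = v₂.length := by
          simp only [List.length_cons] at hlen hlu hlv; omega
        have hn₂ : u₂.length ≤ n := by
          simp only [List.length_cons] at hn hlu; omega
        have := ih u₂ v₂ hn₂ hu₂s hv₂s hlen₂
        rw [hru, hrv, hud, hvd, lex_replicate_append, List.lex_cons_iff]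
        exact this
      · -- p > q : both true
        constructor
        · intro _
          rw [hru, hrv]
          exact List.Lex.rel (Or.inr ⟨rfl, hpq⟩)
        · intro _
          rw [hud, hvd, show List.replicate p a = List.replicate q a ++ List.replicate (p - q) a
              by rw [← List.replicate_add]; congr 1; omega, List.append_assoc,
            lex_replicate_append]
          have hv₂ne : v₂ ≠ [] := by
            intro h0
            rw [h0] at hlv
            simp only [List.length_cons, List.length_nil] at hlu hlv hlen
            omega
          rcases hq2 : v₂ with _ | ⟨c, t⟩
          · exact absurd hq2 hv₂ne
          have hac : a < c := by rw [hq2] at hv₂gt; exact hv₂gt c (by simp)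
          rw [show List.replicate (p - q) a ++ u₂ = a :: (List.replicate (p - q - 1) a ++ u₂)
              by rw [show p - q = (p - q - 1) + 1 by omega, List.replicate_succ]; simp]
          exact List.Lex.rel hac
    · constructor
      · intro h
        exfalso
        cases h with
        | rel h' => omega
        | cons h' => omega
      · intro h
        exfalso
        rw [hru, hrv] at h
        cases h with
        | rel h' => rcases h' with h' | ⟨h', _⟩ <;> omega
        | cons h' => omega
end
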